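/- Let Z be a finite set, let n ≥ 1, let P be a probability mass function on Zⁿ with one-dimensional marginals P₁, …, Pₙ (where P_i(z) = Σ_{zⁿ : z_i = z} P(zⁿ)), and let Q be a probability mass function on Z. Then D(P ‖ Q^{⊗n}) ≥ Σ_{i=1}^n D(P_i ‖ Q). -/

import Mathlib

/-!
STATEMENT 3: For a pmf `P` on `Zⁿ` with one-dimensional marginals `P_1, …, P_n` and a pmf `Q`
on `Z`, `D(P ‖ Q^{⊗n}) ≥ Σ_{i=1}^n D(P_i ‖ Q)` (KL divergences taking values in the extended
reals, with `D(P‖Q) = +∞` when `P` is not absolutely continuous w.r.t. `Q`).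
-/

open scoped BigOperators Classical

/-- `P` is a probability mass function on the finite set `Z`. -/
def IsPmf {Z : Type*} [Fintype Z] (P : Z → ℝ) : Prop :=
  (∀ z, 0 ≤ P z) ∧ ∑ z, P z = 1

/-- Kullback–Leibler divergence (natural log, terms with `P z = 0` contribute `0`);
only meaningful when `P` is absolutely continuous w.r.t. `Q`. -/
noncomputable def klDiv {Z : Type*} [Fintype Z] (P Q : Z → ℝ) : ℝ :=
  ∑ z, if 0 < P z then P z * Real.log (P z / Q z) else 0

/-- Extended-real Kullback–Leibler divergence: equals `+∞` if `P` is not absolutely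
continuous with respect to `Q`. -/
noncomputable def klDivE {Z : Type*} [Fintype Z] (P Q : Z → ℝ) : EReal :=
  if ∀ z, Q z = 0 → P z = 0 then ((klDiv P Q : ℝ) : EReal) else ⊤

/-- The `n`-fold product pmf on `Fin n → Z`. -/
noncomputable def prodPmf {Z : Type*} [Fintype Z] (P : Z → ℝ) (n : ℕ) : (Fin n → Z) → ℝ :=
  fun x => ∏ i, P (x i)

/-- The `i`-th one-dimensional marginal of a pmf on `Fin n → Z`. -/
noncomputable def marginal {Z : Type*} [Fintype Z] {n : ℕ}
    (P : (Fin n → Z) → ℝ) (i : Fin n) : Z → ℝ :=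
  fun z => ∑ x ∈ Finset.univ.filter (fun x : Fin n → Z => x i = z), P x

lemma klDiv_eq {Z : Type*} [Fintype Z] (P Q : Z → ℝ) (h : ∀ z, 0 ≤ P z) :
    klDiv P Q = ∑ z, P z * Real.log (P z / Q z) := by
  unfold klDiv
  refine Finset.sum_congr rfl fun z _ => ?_
  by_cases hz : 0 < P z
  · simp [hz]
  · have : P z = 0 := le_antisymm (not_lt.1 hz) (h z)
    simp [this]

lemma ecoe_sum {ι : Type*} (s : Finset ι) (f : ι → ℝ) :
    ((∑ i ∈ s, f i : ℝ) : EReal) = ∑ i ∈ s, ((f i : ℝ) : EReal) := by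
  classical
  induction s using Finset.induction with
  | empty => simp
  | insert a s h ih => simp [Finset.sum_insert h, EReal.coe_add, ih]

lemma marginal_nonneg {Z : Type*} [Fintype Z] {n : ℕ} (P : (Fin n → Z) → ℝ)
    (hP : ∀ x, 0 ≤ P x) (i : Fin n) (z : Z) : 0 ≤ marginal P i z :=
  Finset.sum_nonneg fun x _ => hP x

lemma sum_marginal {Z : Type*} [Fintype Z] {n : ℕ} (P : (Fin n → Z) → ℝ) (i : Fin n) :
    ∑ z, marginal P i z = ∑ x, P x := by
  unfold marginal
  exact Finset.sum_fiberwise _ (fun x => x i) P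

lemma self_le_marginal {Z : Type*} [Fintype Z] {n : ℕ} (P : (Fin n → Z) → ℝ)
    (hP : ∀ x, 0 ≤ P x) (i : Fin n) (x : Fin n → Z) : P x ≤ marginal P i (x i) := by
  unfold marginal
  exact Finset.single_le_sum (fun y _ => hP y) (by simp)

lemma klDiv_nonneg {Z : Type*} [Fintype Z] (P R : Z → ℝ) (hP : IsPmf P)
    (hR : ∀ z, 0 ≤ R z) (hRs : ∑ z, R z ≤ 1) (hac : ∀ z, R z = 0 → P z = 0) :
    0 ≤ klDiv P R := by
  rw [klDiv_eq P R hP.1]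
  have key : ∀ z, P z - R z ≤ P z * Real.log (P z / R z) := by
    intro z
    by_cases hz : 0 < P z
    · have hRz : 0 < R z := lt_of_le_of_ne (hR z) fun h => (hz.ne' (hac z h.symm))
      have h1 : Real.log (R z / P z) ≤ R z / P z - 1 :=
        Real.log_le_sub_one_of_pos (div_pos hRz hz)
      have h2 : Real.log (R z / P z) = - Real.log (P z / R z) := by
        rw [← Real.log_inv]; congr 1; field_simp
      rw [h2] at h1
      have h3 : 1 - R z / P z ≤ Real.log (P z / R z) := by linarith
      have := mul_le_mul_of_nonneg_left h3 hz.le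
      calc P z - R z = P z * (1 - R z / P z) := by field_simp
        _ ≤ P z * Real.log (P z / R z) := this
    · have : P z = 0 := le_antisymm (not_lt.1 hz) (hP.1 z)
      simp [this]
      linarith [hR z]
  calc (0:ℝ) = 1 - 1 := by ring
    _ ≤ ∑ z, P z - ∑ z, R z := by rw [hP.2]; linarith
    _ = ∑ z, (P z - R z) := (Finset.sum_sub_distrib _ _).symm
    _ ≤ ∑ z, P z * Real.log (P z / R z) := Finset.sum_le_sum fun z _ => key z

theorem sum_klDiv_marginal_le_klDiv_prod {Z : Type*} [Fintype Z]
    (n : ℕ) (hn : 1 ≤ n) (P : (Fin n → Z) → ℝ) (hP : IsPmf P)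
    (Q : Z → ℝ) (hQ : IsPmf Q) :
    ∑ i : Fin n, klDivE (marginal P i) Q ≤ klDivE P (prodPmf Q n) := by
  by_cases hac : ∀ x, prodPmf Q n x = 0 → P x = 0
  · -- absolutely continuous case
    have hPnn := hP.1
    have hQnn := hQ.1
    -- each marginal is a.c. wrt Q
    have hmac : ∀ i : Fin n, ∀ z, Q z = 0 → marginal P i z = 0 := by
      intro i z hz
      unfold marginal
      refine Finset.sum_eq_zero fun x hx => ?_
      simp only [Finset.mem_filter] at hx
      apply hac
      unfold prodPmf
      exact Finset.prod_eq_zero (Finset.mem_univ i) (by rw [hx.2, hz])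
    -- the product-of-marginals measure M
    set M : (Fin n → Z) → ℝ := fun x => ∏ i, marginal P i (x i) with hM
    have hMnn : ∀ x, 0 ≤ M x := fun x =>
      Finset.prod_nonneg fun i _ => marginal_nonneg P hPnn i (x i)
    have hMsum : ∑ x, M x = 1 := by
      rw [hM]
      rw [← Fintype.prod_sum (fun (i : Fin n) (z : Z) => marginal P i z)]
      rw [Finset.prod_eq_one]
      intro i _
      rw [sum_marginal]; exact hP.2
    have hMac : ∀ x, M x = 0 → P x = 0 := by
      intro x hx
      rw [hM] at hx
      obtain ⟨i, -, hi⟩ := Finset.prod_eq_zero_iff.1 hx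
      have := self_le_marginal P hPnn i x
      have := hPnn x
      linarith [hi ▸ this]
    -- pointwise positivity facts when P x > 0
    have hpos : ∀ x, 0 < P x → (∀ i : Fin n, 0 < Q (x i)) ∧ (∀ i : Fin n, 0 < marginal P i (x i)) := by
      intro x hx
      constructor
      · intro i
        rcases lt_or_eq_of_le (hQnn (x i)) with h | h
        · exact h
        · exfalso
          have : prodPmf Q n x = 0 :=
            Finset.prod_eq_zero (Finset.mem_univ i) h.symm
          exact hx.ne' (hac x this)
      · intro i
        exact lt_of_lt_of_le hx (self_le_marginal P hPnn i x)
    -- key decomposition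
    have hdecomp : klDiv P (prodPmf Q n) =
        klDiv P M + ∑ i : Fin n, klDiv (marginal P i) Q := by
      have hmarg_eq : ∀ i : Fin n,
          klDiv (marginal P i) Q = ∑ x, P x * Real.log (marginal P i (x i) / Q (x i)) := by
        intro i
        rw [klDiv_eq _ _ (marginal_nonneg P hPnn i)]
        rw [← Finset.sum_fiberwise Finset.univ (fun x : Fin n → Z => x i)
          (fun x => P x * Real.log (marginal P i (x i) / Q (x i)))]
        refine Finset.sum_congr rfl fun z _ => ?_
        have : ∀ x ∈ Finset.univ.filter (fun x : Fin n → Z => x i = z),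
            P x * Real.log (marginal P i (x i) / Q (x i))
              = P x * Real.log (marginal P i z / Q z) := by
          intro x hx
          simp only [Finset.mem_filter] at hx
          rw [hx.2]
        rw [Finset.sum_congr rfl this, ← Finset.sum_mul]
        rfl
      rw [klDiv_eq _ _ hPnn, klDiv_eq _ _ hPnn]
      simp_rw [hmarg_eq]
      rw [Finset.sum_comm, ← Finset.sum_add_distrib]
      refine Finset.sum_congr rfl fun x _ => ?_
      by_cases hx : 0 < P x
      · obtain ⟨hQp, hMp⟩ := hpos x hx
        rw [← Finset.mul_sum, ← mul_add]
        congr 1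
        have hQnx : (0:ℝ) < prodPmf Q n x := Finset.prod_pos fun i _ => hQp i
        have hMx : (0:ℝ) < M x := Finset.prod_pos fun i _ => hMp i
        rw [Real.log_div hx.ne' hQnx.ne', Real.log_div hx.ne' hMx.ne']
        have h1 : Real.log (prodPmf Q n x) = ∑ i, Real.log (Q (x i)) :=
          Real.log_prod fun i _ => (hQp i).ne'
        have h2 : Real.log (M x) = ∑ i, Real.log (marginal P i (x i)) :=
          Real.log_prod fun i _ => (hMp i).ne'
        have h3 : ∀ i : Fin n, Real.log (marginal P i (x i) / Q (x i))
            = Real.log (marginal P i (x i)) - Real.log (Q (x i)) := fun i =>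
          Real.log_div (hMp i).ne' (hQp i).ne'
        rw [h1, h2]
        simp_rw [h3]
        rw [Finset.sum_sub_distrib]
        ring
      · have : P x = 0 := le_antisymm (not_lt.1 hx) (hPnn x)
        simp [this]
    -- conclude
    have hkl : ∑ i : Fin n, klDiv (marginal P i) Q ≤ klDiv P (prodPmf Q n) := by
      rw [hdecomp]
      have := klDiv_nonneg P M hP hMnn (le_of_eq hMsum) hMac
      linarith
    unfold klDivE
    rw [if_pos hac]
    have : ∀ i : Fin n, (if ∀ z, Q z = 0 → marginal P i z = 0
        then ((klDiv (marginal P i) Q : ℝ) : EReal) else ⊤)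
        = ((klDiv (marginal P i) Q : ℝ) : EReal) := fun i => if_pos (hmac i)
    rw [Finset.sum_congr rfl fun i _ => this i, ← ecoe_sum]
    exact EReal.coe_le_coe_iff.2 hkl
  · unfold klDivE
    rw [if_neg hac]
    exact le_top
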